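/- Let d ≥ 2 and let a, b be two distinct points of the (n,d)-board that attack each other (in the standard sense). Then a and b also attack each other modularly, i.e., there exists a nonzero ε ∈ {−1,0,1}^d with Σ_{i=1}^d ε_i·a_i ≡ Σ_{i=1}^d ε_i·b_i (mod n). Consequently, every modularly non-attacking configuration on the (n,d)-board is a non-attacking configuration in the standard sense. -/
import Mathlib


/-- A point `q` lies on the `(n,d)`-board, i.e. all coordinates are in `{1,…,n}`. -/
def onBoard (n d : ℕ) (q : Fin d → ℕ) : Prop :=
  ∀ i, 1 ≤ q i ∧ q i ≤ n

/-- Queen `a` attacks queen `b`: there are an integer `m` and a nonzero vector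
`ε ∈ {-1,0,1}^d` with `a i = ε i * m + b i` for all `i`. -/
def attacks {d : ℕ} (a b : Fin d → ℕ) : Prop :=
  ∃ (m : ℤ) (ε : Fin d → ℤ), (∀ i, ε i = -1 ∨ ε i = 0 ∨ ε i = 1) ∧ ε ≠ 0 ∧
    ∀ i, (a i : ℤ) = ε i * m + (b i : ℤ)

/-- A set of queens is non-attacking if no two distinct members attack each other. -/
def nonAttacking {d : ℕ} (Q : Finset (Fin d → ℕ)) : Prop :=
  ∀ a ∈ Q, ∀ b ∈ Q, a ≠ b → ¬ attacks a b

/-- A partial solution on the `(n,d)`-board: a non-attacking set fitting the board. -/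
def isPartial (n d : ℕ) (Q : Finset (Fin d → ℕ)) : Prop :=
  (∀ q ∈ Q, onBoard n d q) ∧ nonAttacking Q

/-- A solution to the `(n,d)`-queens problem: a non-attacking set of `n^(d-1)` queens. -/
def isSolution (n d : ℕ) (Q : Finset (Fin d → ℕ)) : Prop :=
  isPartial n d Q ∧ Q.card = n ^ (d - 1)

/-- The `(n,d)`-board as a finite set. -/
def boardFinset (n d : ℕ) : Finset (Fin d → ℕ) :=
  Fintype.piFinset fun _ => Finset.Icc 1 n

/-- `Qmax n d` : the maximum cardinality of a non-attacking set on the `(n,d)`-board. -/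
noncomputable def Qmax (n d : ℕ) : ℕ :=
  sSup {k | ∃ Q : Finset (Fin d → ℕ), isPartial n d Q ∧ Q.card = k}

/-- `a` attacks `b` modularly (on the torus): there is a nonzero `ε ∈ {-1,0,1}^d`
with `Σ ε i * a i ≡ Σ ε i * b i (mod n)`. -/
def modAttacks (n : ℕ) {d : ℕ} (a b : Fin d → ℕ) : Prop :=
  ∃ ε : Fin d → ℤ, (∀ i, ε i = -1 ∨ ε i = 0 ∨ ε i = 1) ∧ ε ≠ 0 ∧
    (∑ i, ε i * (a i : ℤ)) ≡ (∑ i, ε i * (b i : ℤ)) [ZMOD (n : ℤ)]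

/-- For `d ≥ 2`, any standard attack between distinct board points is also a modular
attack; consequently every modularly non-attacking configuration on the `(n,d)`-board
is non-attacking in the standard sense. -/

theorem aux_attack_mod (n d : ℕ) (hd : 2 ≤ d) (a b : Fin d → ℕ) :
    (∃ (m : ℤ) (ε : Fin d → ℤ), (∀ i, ε i = -1 ∨ ε i = 0 ∨ ε i = 1) ∧ ε ≠ 0 ∧
      ∀ i, (a i : ℤ) = ε i * m + (b i : ℤ)) →
    ∃ ε : Fin d → ℤ, (∀ i, ε i = -1 ∨ ε i = 0 ∨ ε i = 1) ∧ ε ≠ 0 ∧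
      (∑ i, ε i * (a i : ℤ)) ≡ (∑ i, ε i * (b i : ℤ)) [ZMOD (n : ℤ)] := by
  rintro ⟨m, ε, hε1, hε0, heq⟩
  have hdiff : ∀ k, (a k : ℤ) - b k = ε k * m := fun k => by rw [heq k]; ring
  by_cases h : ∃ j, ε j = 0
  · obtain ⟨j, hj⟩ := h
    refine ⟨fun k => if k = j then 1 else 0, ?_, ?_, ?_⟩
    · intro i; by_cases h : i = j <;> simp [h]
    · intro hc
      have := congrFun hc j
      simp at this
    · have haj : (a j : ℤ) = b j := by rw [heq j, hj]; ring
      have : (∑ k, (if k = j then (1:ℤ) else 0) * (a k : ℤ)) =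
          (∑ k, (if k = j then (1:ℤ) else 0) * (b k : ℤ)) := by
        simp [ite_mul, haj]
      rw [this]
  · push_neg at h
    obtain ⟨i, j, hij⟩ : ∃ i j : Fin d, i ≠ j :=
      ⟨⟨0, by omega⟩, ⟨1, by omega⟩, by simp [Fin.ext_iff]⟩
    refine ⟨fun k => if k = i then ε i else if k = j then -ε j else 0, ?_, ?_, ?_⟩
    · intro k
      by_cases h1 : k = i
      · simpa [h1] using hε1 i
      by_cases h2 : k = j
      · have hji : ¬ j = i := fun e => hij e.symm
        rcases hε1 j with hh | hh | hh <;> simp [h2, hji, hh]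
      · simp [h1, h2]
    · intro hc
      have := congrFun hc i
      simp [h i] at this
    · have hsum : (∑ k, (if k = i then ε i else if k = j then -ε j else 0) * (a k : ℤ)) =
          (∑ k, (if k = i then ε i else if k = j then -ε j else 0) * (b k : ℤ)) := by
        rw [← sub_eq_zero, ← Finset.sum_sub_distrib]
        have key : ∀ k, (if k = i then ε i else if k = j then -ε j else 0) * (a k : ℤ) -
            (if k = i then ε i else if k = j then -ε j else 0) * (b k : ℤ) =
            (if k = i then m else 0) + (if k = j then -m else 0) := by
          intro k
          by_cases h1 : k = i
          · subst h1
            have hsq : ε k * ε k = 1 := by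
              rcases hε1 k with hh | hh | hh <;> simp [hh] <;> exact absurd hh (h k)
            simp only [eq_self_iff_true, if_true, if_pos rfl, if_neg hij]
            rw [← mul_sub, hdiff k]
            linear_combination m * hsq
          by_cases h2 : k = j
          · subst h2
            have hji : ¬ k = i := h1
            have hsq : ε k * ε k = 1 := by
              rcases hε1 k with hh | hh | hh <;> simp [hh] <;> exact absurd hh (h k)
            simp only [eq_self_iff_true, if_true, if_neg hji, if_pos rfl]
            rw [← mul_sub, hdiff k]
            linear_combination (-m) * hsq
          · simp [h1, h2]
        rw [Finset.sum_congr rfl fun k _ => key k, Finset.sum_add_distrib]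
        simp
      rw [hsum]

theorem attack_implies_modular_attack (n d : ℕ) (hd : 2 ≤ d) :
    (∀ a b : Fin d → ℕ, onBoard n d a → onBoard n d b → a ≠ b →
      attacks a b → modAttacks n a b) ∧
    (∀ Q : Finset (Fin d → ℕ), (∀ q ∈ Q, onBoard n d q) →
      (∀ a ∈ Q, ∀ b ∈ Q, a ≠ b → ¬ modAttacks n a b) → nonAttacking Q) := by
  have main : ∀ a b : Fin d → ℕ, attacks a b → modAttacks n a b :=
    fun a b h => aux_attack_mod n d hd a b h
  refine ⟨fun a b _ _ _ h => main a b h, ?_⟩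
  intro Q hQ hmod a ha b hb hab hatt
  exact hmod a ha b hb hab (main a b hatt)
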